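/- Let V and W be finite-dimensional real inner product spaces with V ≠ {0}, π: V → W a linear map, and K a connected compact Lie group acting linearly and orthogonally on V such that ker π contains no non-trivial K-invariant linear subspace. Let μ be the normalized Haar measure on K. Then for every r, δ > 0 there exists R > 0 such that μ{k ∈ K : ‖π(k·v)‖ < r} < δ for all v ∈ V with ‖v‖ > R. -/

import Mathlib

open MeasureTheory Pointwise Filter Module
open scoped ENNReal NNReal
set_option maxHeartbeats 1000000



section RightInv
variable {K : Type*} [Group K] [TopologicalSpace K] [IsTopologicalGroup K]
    [CompactSpace K] [MeasurableSpace K] [BorelSpace K]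

theorem aux_right_invariant (μ : Measure K) [μ.IsHaarMeasure] [IsProbabilityMeasure μ] :
    μ.IsMulRightInvariant := by
  constructor
  intro g
  set μ' := Measure.map (· * g) μ with hμ'
  haveI : IsProbabilityMeasure μ' :=
    Measure.isProbabilityMeasure_map (measurable_mul_const g).aemeasurable
  have h := Measure.isMulInvariant_eq_smul_of_compactSpace μ' μ
  have huniv := congrArg (fun m : Measure K => m Set.univ) h
  simp only [Measure.smul_apply, smul_eq_mul, measure_univ, mul_one] at huniv
  have hc : μ'.haarScalarFactor μ = 1 := by
    have h2 := huniv.symm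
    rwa [ENNReal.smul_def, smul_eq_mul, mul_one, ENNReal.coe_eq_one] at h2
  rw [h, hc, one_smul]

theorem aux_eventually_pos (μ : Measure K) [μ.IsHaarMeasure] [IsProbabilityMeasure μ]
    {Z : Set K} (hZc : IsClosed Z) (hpos : μ Z ≠ 0) :
    ∀ᶠ s in nhds (1 : K), 0 < μ (Z ∩ (· * s) ⁻¹' Z) := by
  haveI : μ.IsMulRightInvariant := aux_right_invariant μ
  have hZcomp : IsCompact Z := hZc.isCompact
  obtain ⟨U, hZU, hUopen, hμU⟩ := hZcomp.exists_isOpen_lt_add (μ := μ) hpos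
  obtain ⟨N, hN1, hNsub⟩ := compact_open_separated_mul_right hZcomp hUopen hZU
  have hinv : (Inv.inv : K → K) ⁻¹' N ∈ nhds (1 : K) :=
    (continuous_inv.continuousAt (x := (1 : K))).preimage_mem_nhds (by rwa [inv_one])
  filter_upwards [hinv] with s hs
  set T := (· * s) ⁻¹' Z with hT
  have hTU : T ⊆ U := by
    intro h hh
    have h1 : h * s ∈ Z := hh
    have h2 : (h * s) * s⁻¹ ∈ U := hNsub (Set.mul_mem_mul h1 hs)
    simpa using h2
  have hμT : μ T = μ Z := measure_preimage_mul_right μ s Z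
  by_contra hcon
  push_neg at hcon
  have h0 : μ (Z ∩ T) = 0 := le_antisymm hcon zero_le
  have hdiff : μ (U \ Z) < μ Z :=
    measure_diff_lt_of_lt_add hZc.nullMeasurableSet hZU (measure_ne_top μ Z) hμU
  have hle : μ T ≤ μ (U \ Z) := by
    calc μ T ≤ μ ((T \ Z) ∪ (Z ∩ T)) := measure_mono (fun x hx => by
          by_cases hxZ : x ∈ Z
          · exact Or.inr ⟨hxZ, hx⟩
          · exact Or.inl ⟨hx, hxZ⟩)
      _ ≤ μ (T \ Z) + μ (Z ∩ T) := measure_union_le _ _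
      _ = μ (T \ Z) := by rw [h0, add_zero]
      _ ≤ μ (U \ Z) := measure_mono (Set.diff_subset_diff_left hTU)
  exact absurd (hμT ▸ lt_of_le_of_lt hle hdiff) (lt_irrefl _)
end RightInv

section Core
variable {V W : Type*}
    [NormedAddCommGroup V] [NormedSpace ℝ V] [FiniteDimensional ℝ V]
    [NormedAddCommGroup W] [NormedSpace ℝ W]
    {K : Type*} [Group K] [TopologicalSpace K] [IsTopologicalGroup K]
    [CompactSpace K] [ConnectedSpace K]
    [MeasurableSpace K] [BorelSpace K]
    [MulAction K V]

theorem aux_zero_set (π : V →ₗ[ℝ] W)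
    (hlin : ∀ k : K, IsLinearMap ℝ fun v : V => k • v)
    (hcont : Continuous fun p : K × V => p.1 • p.2)
    (hker : ∀ U : Submodule ℝ V, (∀ (k : K), ∀ v ∈ U, k • v ∈ U) →
      (∀ v ∈ U, π v = 0) → U = ⊥)
    (μ : Measure K) [μ.IsHaarMeasure] [IsProbabilityMeasure μ]
    (u : V) (hu : u ≠ 0) :
    μ {k : K | π (k • u) = 0} = 0 := by
  classical
  by_contra hpos
  -- linear action maps
  set actL : K → V →ₗ[ℝ] V := fun k => IsLinearMap.mk' _ (hlin k) with hactL
  have actL_apply : ∀ (k : K) (w : V), actL k w = k • w := fun k w => rfl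
  -- continuity of orbit maps
  have hcw : ∀ w : V, Continuous fun k : K => π (k • w) := by
    intro w
    have h1 : Continuous fun k : K => k • w :=
      hcont.comp (continuous_id.prodMk continuous_const)
    exact (LinearMap.continuous_of_finiteDimensional π).comp h1
  -- zero sets
  set Z : Submodule ℝ V → Set K := fun U => ⋂ w ∈ (U : Set V), {k : K | π (k • w) = 0}
    with hZdef
  have mem_Z : ∀ {k : K} {U : Submodule ℝ V}, k ∈ Z U ↔ ∀ w ∈ U, π (k • w) = 0 := by
    intro k U; simp [hZdef]
  have hZclosed : ∀ U : Submodule ℝ V, IsClosed (Z U) := by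
    intro U
    exact isClosed_biInter fun w _ => isClosed_eq (hcw w) continuous_const
  -- the singleton span
  have hZspan : {k : K | π (k • u) = 0} ⊆ Z (Submodule.span ℝ {u}) := by
    intro k hk
    rw [mem_Z]
    intro w hw
    obtain ⟨c, rfl⟩ := Submodule.mem_span_singleton.mp hw
    have : k • (c • u) = c • (k • u) := (hlin k).map_smul c u
    rw [this, π.map_smul, hk, smul_zero]
  -- maximal dimension subspace with positive measure zero set
  set P : ℕ → Prop := fun n => ∃ U : Submodule ℝ V, finrank ℝ U = n ∧ μ (Z U) ≠ 0 with hPdef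
  have hP1 : P 1 := by
    refine ⟨Submodule.span ℝ {u}, finrank_span_singleton hu, ?_⟩
    intro hz
    exact hpos (le_antisymm (hz ▸ measure_mono hZspan) zero_le)
  have hPbound : ∀ n, P n → n ≤ finrank ℝ V := by
    rintro n ⟨U, rfl, -⟩
    exact U.finrank_le
  set d : ℕ := Nat.findGreatest P (finrank ℝ V) with hd
  have hPd : P d := Nat.findGreatest_spec (hPbound 1 hP1) hP1
  have hd1 : 1 ≤ d := Nat.le_findGreatest (hPbound 1 hP1) hP1
  have hmax : ∀ m, P m → m ≤ d := by
    intro m hm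
    by_contra hlt
    exact Nat.findGreatest_is_greatest (lt_of_not_ge hlt) (hPbound m hm) hm
  obtain ⟨U, hUd, hUpos⟩ := hPd
  -- translation property
  have hZtrans : ∀ s : K, Z (U.map (actL s)) = (· * s) ⁻¹' Z U := by
    intro s
    ext h
    simp only [Set.mem_preimage, mem_Z]
    constructor
    · intro hh w hw
      have := hh (s • w) (Submodule.mem_map_of_mem (p := U) (f := actL s) hw)
      rwa [← mul_smul] at this
    · rintro hh w hw
      obtain ⟨w', hw', rfl⟩ := Submodule.mem_map.mp hw
      rw [actL_apply, ← mul_smul]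
      exact hh w' hw'
  -- intersection property
  have hZinf : ∀ U₁ U₂ : Submodule ℝ V, Z (U₁ ⊔ U₂) = Z U₁ ∩ Z U₂ := by
    intro U₁ U₂
    apply Set.Subset.antisymm
    · intro k hk
      rw [mem_Z] at hk
      exact ⟨mem_Z.mpr fun w hw => hk w (Submodule.mem_sup_left hw),
        mem_Z.mpr fun w hw => hk w (Submodule.mem_sup_right hw)⟩
    · rintro k ⟨h1, h2⟩
      rw [mem_Z] at h1 h2 ⊢
      intro w hw
      obtain ⟨a, ha, b, hb, rfl⟩ := Submodule.mem_sup.mp hw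
      have : k • (a + b) = k • a + k • b := (hlin k).map_add a b
      rw [this, π.map_add, h1 a ha, h2 b hb, add_zero]
  -- linear equivalence for each k
  have hfr : ∀ s : K, finrank ℝ (U.map (actL s)) = finrank ℝ U := by
    intro s
    have hcomp : ∀ (a b : K), (actL a).comp (actL b) = actL (a * b) := by
      intro a b; ext w; simp only [LinearMap.comp_apply, actL_apply, mul_smul]
    have e : V ≃ₗ[ℝ] V := LinearEquiv.ofLinear (actL s) (actL s⁻¹)
      (by rw [hcomp, mul_inv_cancel]; ext w; simp [actL_apply])
      (by rw [hcomp, inv_mul_cancel]; ext w; simp [actL_apply])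
    exact LinearEquiv.finrank_map_eq
      (LinearEquiv.ofLinear (actL s) (actL s⁻¹)
        (by rw [hcomp, mul_inv_cancel]; ext w; simp [actL_apply])
        (by rw [hcomp, inv_mul_cancel]; ext w; simp [actL_apply])) U
  -- eventually the map is inside U
  have hev : ∀ᶠ s in nhds (1 : K), U.map (actL s) = U := by
    filter_upwards [aux_eventually_pos μ (hZclosed U) hUpos] with s hs
    have hns : μ (Z (U ⊔ U.map (actL s))) ≠ 0 := by
      rw [hZinf, hZtrans]
      exact hs.ne'
    have hle : finrank ℝ (U ⊔ U.map (actL s) : Submodule ℝ V) ≤ d :=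
      hmax _ ⟨_, rfl, hns⟩
    have heq : U = U ⊔ U.map (actL s) :=
      Submodule.eq_of_le_of_finrank_le le_sup_left (by rw [hUd]; exact hle)
    have hsub : U.map (actL s) ≤ U := le_sup_right.trans heq.symm.le
    exact Submodule.eq_of_le_of_finrank_le hsub (by rw [hfr s])
  -- the stabilizer subgroup
  set H : Subgroup K :=
    { carrier := {g : K | U.map (actL g) = U}
      one_mem' := by
        have : actL (1 : K) = LinearMap.id := by ext w; simp [actL_apply]
        simp [this]
      mul_mem' := by
        intro a b ha hb
        have hcomp : (actL a).comp (actL b) = actL (a * b) := by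
          ext w; simp only [LinearMap.comp_apply, actL_apply, mul_smul]
        show U.map (actL (a * b)) = U
        rw [← hcomp, Submodule.map_comp, hb, ha]
      inv_mem' := by
        intro a ha
        have hcomp : (actL a⁻¹).comp (actL a) = actL (a⁻¹ * a) := by
          ext w; simp only [LinearMap.comp_apply, actL_apply, mul_smul]
        show U.map (actL a⁻¹) = U
        conv_lhs => rw [← ha]
        rw [← Submodule.map_comp, hcomp, inv_mul_cancel]
        have : actL (1 : K) = LinearMap.id := by ext w; simp [actL_apply]
        simp [ha, this] } with hH
  have hHopen : IsOpen (H : Set K) := Subgroup.isOpen_of_mem_nhds H hev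
  have hHuniv : (H : Set K) = Set.univ :=
    IsClopen.eq_univ ⟨H.isClosed_of_isOpen hHopen, hHopen⟩ ⟨1, H.one_mem⟩
  have hinvU : ∀ (g : K), ∀ w ∈ U, g • w ∈ U := by
    intro g w hw
    have hg : g ∈ H := by rw [← SetLike.mem_coe, hHuniv]; trivial
    have hg' : U.map (actL g) = U := hg
    have hmem := Submodule.mem_map_of_mem (f := actL g) hw
    rw [hg'] at hmem
    exact hmem
  -- U is contained in ker π
  obtain ⟨k₀, hk₀⟩ : (Z U).Nonempty := nonempty_of_measure_ne_zero hUpos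
  have hUker : ∀ w ∈ U, π w = 0 := by
    intro w hw
    have h1 : k₀⁻¹ • w ∈ U := hinvU k₀⁻¹ w hw
    have h2 := mem_Z.mp hk₀ _ h1
    rwa [smul_inv_smul] at h2
  have : U = ⊥ := hker U hinvU hUker
  rw [this, finrank_bot] at hUd
  omega

theorem aux_small (π : V →ₗ[ℝ] W)
    (hlin : ∀ k : K, IsLinearMap ℝ fun v : V => k • v)
    (hcont : Continuous fun p : K × V => p.1 • p.2)
    (hker : ∀ U : Submodule ℝ V, (∀ (k : K), ∀ v ∈ U, k • v ∈ U) →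
      (∀ v ∈ U, π v = 0) → U = ⊥)
    (μ : Measure K) [μ.IsHaarMeasure] [IsProbabilityMeasure μ]
    (u : V) (hu : u ≠ 0) {δ' : ℝ≥0∞} (hδ : 0 < δ') :
    ∃ ε : ℝ, 0 < ε ∧ μ {k : K | ‖π (k • u)‖ < ε} < δ' := by
  have hcw : Continuous fun k : K => π (k • u) :=
    (LinearMap.continuous_of_finiteDimensional π).comp
      (hcont.comp (continuous_id.prodMk continuous_const))
  set A : ℕ → Set K := fun n => {k : K | ‖π (k • u)‖ < 1 / ((n : ℝ) + 1)} with hA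
  have hAopen : ∀ n, IsOpen (A n) :=
    fun n => isOpen_lt (continuous_norm.comp hcw) continuous_const
  have hAanti : Antitone A := by
    intro n m hnm k hk
    have h1 : (1 : ℝ) / ((m : ℝ) + 1) ≤ 1 / ((n : ℝ) + 1) := by
      apply one_div_le_one_div_of_le
      · positivity
      · have : (n : ℝ) ≤ (m : ℝ) := Nat.cast_le.mpr hnm
        linarith
    exact lt_of_lt_of_le hk h1
  have hAint : ⋂ n, A n = {k : K | π (k • u) = 0} := by
    ext k
    simp only [Set.mem_iInter, Set.mem_setOf_eq, hA]
    constructor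
    · intro hk
      by_contra h
      obtain ⟨n, hn⟩ := exists_nat_one_div_lt (norm_pos_iff.mpr h)
      exact absurd (hk n) (not_lt.mpr hn.le)
    · intro hk n
      rw [hk, norm_zero]
      positivity
  have htend := tendsto_measure_iInter_atTop (μ := μ)
    (fun n => ((hAopen n).measurableSet).nullMeasurableSet) hAanti ⟨0, measure_ne_top μ _⟩
  rw [hAint, aux_zero_set π hlin hcont hker μ u hu] at htend
  obtain ⟨n, hn⟩ := (htend.eventually_lt_const hδ).exists
  exact ⟨1 / ((n : ℝ) + 1), by positivity, hn⟩

theorem aux_uniform [Nontrivial V] (π : V →ₗ[ℝ] W)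
    (hlin : ∀ k : K, IsLinearMap ℝ fun v : V => k • v)
    (horth : ∀ (k : K) (v : V), ‖k • v‖ = ‖v‖)
    (hcont : Continuous fun p : K × V => p.1 • p.2)
    (hker : ∀ U : Submodule ℝ V, (∀ (k : K), ∀ v ∈ U, k • v ∈ U) →
      (∀ v ∈ U, π v = 0) → U = ⊥)
    (μ : Measure K) [μ.IsHaarMeasure] [IsProbabilityMeasure μ]
    {δ' : ℝ≥0∞} (hδ : 0 < δ') :
    ∃ ε : ℝ, 0 < ε ∧ ∀ u : V, ‖u‖ = 1 → μ {k : K | ‖π (k • u)‖ < ε} < δ' := by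
  classical
  set πc : V →L[ℝ] W := LinearMap.toContinuousLinearMap π with hπc
  set C : ℝ := ‖πc‖ + 1 with hC
  have hC0 : 0 < C := by
    have := norm_nonneg πc
    rw [hC]; linarith
  set S : Set V := Metric.sphere (0 : V) 1 with hS
  have hSne : ∀ u : V, u ∈ S → u ≠ 0 := by
    intro u huS
    have h1 : ‖u‖ = 1 := by simpa [hS] using huS
    intro h
    rw [h, norm_zero] at h1
    norm_num at h1
  have hch : ∀ i : S, ∃ ε : ℝ, 0 < ε ∧ μ {k : K | ‖π (k • (i : V))‖ < ε} < δ' :=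
    fun i => aux_small π hlin hcont hker μ (i : V) (hSne _ i.2) hδ
  choose ε0 hε0pos hε0 using hch
  set B : S → Set V := fun i => Metric.ball (i : V) (ε0 i / (2 * C)) with hB
  have hcover : S ⊆ ⋃ i : S, B i := by
    intro u huS
    refine Set.mem_iUnion.mpr ⟨⟨u, huS⟩, ?_⟩
    simp only [hB, Metric.mem_ball, dist_self]
    have := hε0pos ⟨u, huS⟩
    positivity
  obtain ⟨t, ht⟩ := (isCompact_sphere (0 : V) 1).elim_finite_subcover B
    (fun i => Metric.isOpen_ball) hcover
  obtain ⟨x, hx⟩ := exists_ne (0 : V)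
  have hxS : ‖x‖⁻¹ • x ∈ S := by
    have hx0 : ‖x‖ ≠ 0 := norm_ne_zero_iff.mpr hx
    simp only [hS, mem_sphere_iff_norm, sub_zero, norm_smul, norm_inv, norm_norm]
    field_simp
  have htne : t.Nonempty := by
    obtain ⟨i, hit, -⟩ := Set.mem_iUnion₂.mp (ht hxS)
    exact ⟨i, hit⟩
  refine ⟨t.inf' htne (fun i => ε0 i / 2), ?_, ?_⟩
  · rw [Finset.lt_inf'_iff]
    intro i _
    have := hε0pos i
    positivity
  · intro u hu1
    have huS : u ∈ S := by simpa [hS, mem_sphere_iff_norm, sub_zero] using hu1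
    obtain ⟨i, hit, hiu⟩ := Set.mem_iUnion₂.mp (ht huS)
    have hdist : ‖u - (i : V)‖ < ε0 i / (2 * C) := by
      simpa [hB, Metric.mem_ball, dist_eq_norm] using hiu
    have hsub : {k : K | ‖π (k • u)‖ < t.inf' htne (fun i => ε0 i / 2)}
        ⊆ {k : K | ‖π (k • (i : V))‖ < ε0 i} := by
      intro k hk
      simp only [Set.mem_setOf_eq] at hk ⊢
      have hkε : ‖π (k • u)‖ < ε0 i / 2 :=
        lt_of_lt_of_le hk (Finset.inf'_le _ hit)
      have hdecomp : (i : V) = u + ((i : V) - u) := by abel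
      have hsmul : k • (i : V) = k • u + k • ((i : V) - u) := by
        conv_lhs => rw [hdecomp]
        exact (hlin k).map_add u ((i : V) - u)
      have hbound : ‖π (k • ((i : V) - u))‖ ≤ C * ‖(i : V) - u‖ := by
        have h1 : ‖πc (k • ((i : V) - u))‖ ≤ ‖πc‖ * ‖k • ((i : V) - u)‖ :=
          πc.le_opNorm _
        have h2 : ‖k • ((i : V) - u)‖ = ‖(i : V) - u‖ := horth _ _
        have h3 : πc (k • ((i : V) - u)) = π (k • ((i : V) - u)) := rfl
        rw [h3, h2] at h1
        refine h1.trans ?_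
        have := norm_nonneg ((i : V) - u)
        apply mul_le_mul_of_nonneg_right _ this
        rw [hC]; linarith
      have hlt2 : ‖π (k • ((i : V) - u))‖ < ε0 i / 2 := by
        have h4 : ‖(i : V) - u‖ < ε0 i / (2 * C) := by
          rwa [← norm_neg, neg_sub]
        have h5 : C * ‖(i : V) - u‖ < C * (ε0 i / (2 * C)) :=
          mul_lt_mul_of_pos_left h4 hC0
        have h6 : C * (ε0 i / (2 * C)) = ε0 i / 2 := by
          field_simp
        calc ‖π (k • ((i : V) - u))‖ ≤ C * ‖(i : V) - u‖ := hbound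
          _ < C * (ε0 i / (2 * C)) := h5
          _ = ε0 i / 2 := h6
      calc ‖π (k • (i : V))‖ = ‖π (k • u) + π (k • ((i : V) - u))‖ := by
            rw [hsmul, π.map_add]
        _ ≤ ‖π (k • u)‖ + ‖π (k • ((i : V) - u))‖ := norm_add_le _ _
        _ < ε0 i / 2 + ε0 i / 2 := by linarith
        _ = ε0 i := by ring
    exact lt_of_le_of_lt (measure_mono hsub) (hε0 i)
end Core


/-- for a compact connected group acting orthogonally on V with no
nontrivial invariant subspace inside ker π, vectors of large norm are pushed to
large ‖π(k·v)‖ for most k (w.r.t. Haar probability measure). -/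
theorem stmt6 {V W : Type*}
    [NormedAddCommGroup V] [InnerProductSpace ℝ V] [FiniteDimensional ℝ V] [Nontrivial V]
    [NormedAddCommGroup W] [InnerProductSpace ℝ W] [FiniteDimensional ℝ W]
    (π : V →ₗ[ℝ] W)
    {K : Type*} [Group K] [TopologicalSpace K] [IsTopologicalGroup K]
    [CompactSpace K] [ConnectedSpace K]
    [MeasurableSpace K] [BorelSpace K]
    [MulAction K V]
    (hlin : ∀ k : K, IsLinearMap ℝ fun v : V => k • v)
    (horth : ∀ (k : K) (v : V), ‖k • v‖ = ‖v‖)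
    (hcont : Continuous fun p : K × V => p.1 • p.2)
    (hker : ∀ U : Submodule ℝ V, (∀ (k : K), ∀ v ∈ U, k • v ∈ U) →
      (∀ v ∈ U, π v = 0) → U = ⊥)
    (μ : Measure K) [μ.IsHaarMeasure] [IsProbabilityMeasure μ] :
    ∀ r δ : ℝ, 0 < r → 0 < δ → ∃ R : ℝ, 0 < R ∧
      ∀ v : V, R < ‖v‖ → μ {k : K | ‖π (k • v)‖ < r} < ENNReal.ofReal δ := by
  intro r δ hr hδ
  have hδ' : 0 < ENNReal.ofReal δ := ENNReal.ofReal_pos.mpr hδ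
  obtain ⟨ε, hε, hun⟩ := aux_uniform π hlin horth hcont hker μ hδ'
  refine ⟨r / ε, div_pos hr hε, ?_⟩
  intro v hv
  have hv0 : 0 < ‖v‖ := lt_trans (div_pos hr hε) hv
  have hu1 : ‖(‖v‖⁻¹ • v)‖ = 1 := by
    rw [norm_smul, norm_inv, norm_norm, inv_mul_cancel₀ hv0.ne']
  refine lt_of_le_of_lt (measure_mono ?_) (hun _ hu1)
  intro k hk
  simp only [Set.mem_setOf_eq] at hk ⊢
  have h1 : k • (‖v‖⁻¹ • v) = ‖v‖⁻¹ • (k • v) := (hlin k).map_smul _ _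
  rw [h1, π.map_smul, norm_smul, norm_inv, norm_norm]
  have h2 : ‖v‖⁻¹ * ‖π (k • v)‖ < ‖v‖⁻¹ * r :=
    mul_lt_mul_of_pos_left hk (inv_pos.mpr hv0)
  refine h2.trans ?_
  have h5 := (div_lt_iff₀ hε).mp hv
  rw [inv_mul_eq_div, div_lt_iff₀ hv0]
  linarith [mul_comm ε ‖v‖]
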